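/- arXiv:2208.06648 — 2 statements merged into one kernel-verified Lean document; each statement's English description precedes it below -/
import Mathlib

section
/- Comparison of group and population mean imputation (Theorem 2): the group reconstruction error from group mean imputation is larger than that from population mean imputation, i.e. L_g^{group} > L_g^{pop}, if and only if either ρ_g / √(α_g(1−α_g)) < (μ_g^O − μ^O)/(2σ_{X|G}) < 0, or 0 < (μ_g^O − μ^O)/(2σ_{X|G}) < ρ_g / √(α_g(1−α_g)). -/
open MeasureTheory ProbabilityTheory

section Aux
variable {Ω : Type*} [MeasurableSpace Ω]

private lemma myintegral_cond (μ : Measure Ω) (A : Set Ω) (f : Ω → ℝ) :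
    ∫ x, f x ∂(μ[|A]) = (μ A)⁻¹.toReal * ∫ x in A, f x ∂μ := by
  rw [ProbabilityTheory.cond, integral_smul_measure, smul_eq_mul]

private lemma myintegrable_cond (μ : Measure Ω) {f : Ω → ℝ} (hf : Integrable f μ) (A : Set Ω)
    (hA : μ A ≠ 0) : Integrable f (μ[|A]) := by
  rw [ProbabilityTheory.cond]
  exact (hf.restrict).smul_measure (by simp [hA])

private lemma L_expand (ν : Measure Ω) [IsProbabilityMeasure ν] (X : Ω → ℝ) (c : ℝ)
    (h1 : Integrable X ν) (h2 : Integrable (fun ω => X ω ^ 2) ν) :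
    ∫ ω, (c - X ω) ^ 2 ∂ν = c ^ 2 - 2 * c * (∫ ω, X ω ∂ν) + ∫ ω, X ω ^ 2 ∂ν := by
  have h : ∀ ω, (c - X ω) ^ 2 = c ^ 2 - 2 * c * X ω + X ω ^ 2 := fun ω => by ring
  have e1 : Integrable (fun ω => c ^ 2 - 2 * c * X ω) ν :=
    (integrable_const _).sub (h1.const_mul _)
  simp_rw [h]
  rw [integral_add e1 h2, integral_sub (integrable_const _) (h1.const_mul _),
      integral_const, integral_const_mul]
  simp

private lemma final_algebra (p u q Q σ : ℝ) (hσ : 0 < σ) :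
    p^2 - 2*p*q + Q > u^2 - 2*u*q + Q ↔
      ((p-q)/σ < (p-u)/(2*σ) ∧ (p-u)/(2*σ) < 0) ∨
      (0 < (p-u)/(2*σ) ∧ (p-u)/(2*σ) < (p-q)/σ) := by
  have h2σ : 0 < 2*σ := by linarith
  constructor
  · intro h
    have hK : 0 < (p - u) * (p + u - 2*q) := by nlinarith
    rcases mul_pos_iff.mp hK with ⟨h1, h2⟩ | ⟨h1, h2⟩
    · right
      refine ⟨div_pos h1 h2σ, ?_⟩
      rw [div_lt_div_iff₀ h2σ hσ]
      nlinarith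
    · left
      refine ⟨?_, div_neg_of_neg_of_pos h1 h2σ⟩
      rw [div_lt_div_iff₀ hσ h2σ]
      nlinarith
  · intro h
    rcases h with ⟨h1, h2⟩ | ⟨h1, h2⟩
    · have a2 : p - u < 0 := by
        rcases div_neg_iff.mp h2 with ⟨_, hc⟩ | ⟨hc, _⟩ <;> linarith
      have a1' := (div_lt_div_iff₀ hσ h2σ).mp h1
      have hb : p + u - 2*q < 0 := by nlinarith
      nlinarith [mul_pos_of_neg_of_neg a2 hb]
    · have a2 : 0 < p - u := by
        rcases div_pos_iff.mp h1 with ⟨hc, _⟩ | ⟨_, hc⟩ <;> linarith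
      have a1' := (div_lt_div_iff₀ h2σ hσ).mp h2
      have hb : 0 < p + u - 2*q := by nlinarith
      nlinarith [mul_pos a2 hb]

end Aux

/-- Covariance of two real random variables under the measure `μ`. -/
noncomputable def condCov {Ω : Type*} [MeasurableSpace Ω] (μ : Measure Ω) (O X : Ω → ℝ) : ℝ :=
  ∫ ω, (O ω - ∫ x, O x ∂μ) * (X ω - ∫ x, X x ∂μ) ∂μ

private lemma cov_expand {Ω : Type*} [MeasurableSpace Ω] (ν : Measure Ω)
    [IsProbabilityMeasure ν] (O X : Ω → ℝ)
    (hO : Integrable O ν) (hX : Integrable X ν)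
    (hOX : Integrable (fun ω => O ω * X ω) ν) :
    condCov ν O X = (∫ ω, O ω * X ω ∂ν) - (∫ ω, O ω ∂ν) * (∫ ω, X ω ∂ν) := by
  unfold condCov
  set a := ∫ x, O x ∂ν with ha
  set b := ∫ x, X x ∂ν with hb
  have h : ∀ ω, (O ω - a) * (X ω - b) = O ω * X ω - a * X ω - b * O ω + a * b :=
    fun ω => by ring
  have e1 : Integrable (fun ω => O ω * X ω - a * X ω) ν := hOX.sub (hX.const_mul a)
  have e2 : Integrable (fun ω => O ω * X ω - a * X ω - b * O ω) ν := e1.sub (hO.const_mul b)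
  simp_rw [h]
  rw [integral_add e2 (integrable_const _), integral_sub e1 (hO.const_mul b),
      integral_sub hOX (hX.const_mul a), integral_const_mul, integral_const_mul, integral_const]
  simp only [measure_univ, probReal_univ, ENNReal.toReal_one, one_smul, smul_eq_mul, mul_one]
  ring

/-- (Theorem 2.) `L_g^group > L_g^pop` iff either
`ρ_g/√(α_g(1−α_g)) < (μ_g^O − μ^O)/(2σ_{X|G}) < 0` or
`0 < (μ_g^O − μ^O)/(2σ_{X|G}) < ρ_g/√(α_g(1−α_g))`. -/
theorem group_vs_population_mean_imputation
    {Ω : Type*} [MeasurableSpace Ω] (μ : Measure Ω) [IsProbabilityMeasure μ]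
    (X O : Ω → ℝ) (G : Set Ω)
    (hXm : Measurable X) (hOm : Measurable O) (hG : MeasurableSet G)
    (hX2 : MemLp X 2 μ)
    (hO01 : ∀ ω, O ω = 0 ∨ O ω = 1)
    (αg σXG ρg μgO μO : ℝ)
    (hαg : αg = ∫ ω, O ω ∂(μ[|G]))
    (hσXG : σXG = Real.sqrt (variance X (μ[|G])))
    (hρg : ρg = condCov (μ[|G]) O X / (Real.sqrt (αg * (1 - αg)) * σXG))
    (hμgO : μgO = ∫ ω, X ω ∂(μ[|O ⁻¹' {1} ∩ G]))
    (hμO : μO = ∫ ω, X ω ∂(μ[|O ⁻¹' {1}]))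
    (hα0 : 0 < αg) (hα1 : αg < 1) (hσpos : 0 < σXG)
    (hpos1 : 0 < μ (O ⁻¹' {1} ∩ G)) (hpos0 : 0 < μ (O ⁻¹' {0} ∩ G))
    (hpos1' : 0 < μ (O ⁻¹' {1})) :
    (∫ ω, (μgO - X ω) ^ 2 ∂(μ[|O ⁻¹' {0} ∩ G])) >
        (∫ ω, (μO - X ω) ^ 2 ∂(μ[|O ⁻¹' {0} ∩ G])) ↔
      (ρg / Real.sqrt (αg * (1 - αg)) < (μgO - μO) / (2 * σXG) ∧
        (μgO - μO) / (2 * σXG) < 0) ∨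
      (0 < (μgO - μO) / (2 * σXG) ∧
        (μgO - μO) / (2 * σXG) < ρg / Real.sqrt (αg * (1 - αg))) := by
  set S1 := O ⁻¹' {1} with hS1
  set S0 := O ⁻¹' {0} with hS0
  have hS1m : MeasurableSet S1 := hOm (measurableSet_singleton 1)
  have hS0m : MeasurableSet S0 := hOm (measurableSet_singleton 0)
  have hOind : ∀ ω, O ω = S1.indicator (fun _ => (1:ℝ)) ω := by
    intro ω
    rcases hO01 ω with h | h <;>
      simp [Set.indicator, hS1, Set.mem_preimage, h]
  have hOXind : ∀ ω, O ω * X ω = S1.indicator X ω := by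
    intro ω
    rcases hO01 ω with h | h <;>
      simp [Set.indicator, hS1, Set.mem_preimage, h]
  have hdisj : Disjoint (S1 ∩ G) (S0 ∩ G) := by
    apply Set.disjoint_left.mpr
    rintro ω ⟨h1, -⟩ ⟨h0, -⟩
    simp only [hS1, hS0, Set.mem_preimage, Set.mem_singleton_iff] at h1 h0
    rw [h0] at h1; norm_num at h1
  have hunion : (S1 ∩ G) ∪ (S0 ∩ G) = G := by
    rw [← Set.union_inter_distrib_right]
    have h : S1 ∪ S0 = Set.univ := by
      ext ω; simp only [Set.mem_union, Set.mem_preimage, Set.mem_singleton_iff,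
        Set.mem_univ, iff_true, hS1, hS0]
      rcases hO01 ω with h | h
      · exact Or.inr h
      · exact Or.inl h
    rw [h, Set.univ_inter]
  have hGpos : 0 < μ G := lt_of_lt_of_le hpos1 (measure_mono Set.inter_subset_right)
  set gT := (μ G).toReal with hgT
  set a1 := (μ (S1 ∩ G)).toReal with ha1
  set a0 := (μ (S0 ∩ G)).toReal with ha0
  have hgTpos : 0 < gT := ENNReal.toReal_pos hGpos.ne' (measure_ne_top μ G)
  have ha1pos : 0 < a1 := ENNReal.toReal_pos hpos1.ne' (measure_ne_top μ _)
  have ha0pos : 0 < a0 := ENNReal.toReal_pos hpos0.ne' (measure_ne_top μ _)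
  have hsum : gT = a1 + a0 := by
    have h : μ G = μ (S1 ∩ G) + μ (S0 ∩ G) := by
      rw [← measure_union hdisj (hS0m.inter hG), hunion]
    rw [hgT, h, ENNReal.toReal_add (measure_ne_top μ _) (measure_ne_top μ _)]
  have hXi : Integrable X μ := hX2.integrable one_le_two
  have hX2i : Integrable (fun ω => X ω ^ 2) μ := by
    have := hX2.integrable_sq
    simpa [sq] using this
  set I1 := ∫ x in S1 ∩ G, X x ∂μ with hI1
  set I0 := ∫ x in S0 ∩ G, X x ∂μ with hI0
  have hinv : ∀ A : Set Ω, ((μ A)⁻¹).toReal = ((μ A).toReal)⁻¹ := fun A => by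
    rw [ENNReal.toReal_inv]
  have hp : μgO = a1⁻¹ * I1 := by rw [hμgO, myintegral_cond, hinv, ha1, hI1]
  set m0 := ∫ ω, X ω ∂(μ[|S0 ∩ G]) with hm0def
  have hq : m0 = a0⁻¹ * I0 := by rw [hm0def, myintegral_cond, hinv, ha0, hI0]
  have hαg' : αg = gT⁻¹ * a1 := by
    rw [hαg, myintegral_cond, hinv, ← hgT]
    congr 1
    calc ∫ x in G, O x ∂μ = ∫ x in G, S1.indicator (fun _ => (1:ℝ)) x ∂μ :=
          integral_congr_ae (Filter.Eventually.of_forall fun ω => hOind ω)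
      _ = ((μ.restrict G) S1).toReal := integral_indicator_one hS1m
      _ = a1 := by rw [Measure.restrict_apply hS1m, ha1]
  have hmG : (∫ ω, X ω ∂(μ[|G])) = gT⁻¹ * (I1 + I0) := by
    rw [myintegral_cond, hinv, ← hgT]
    congr 1
    rw [← hunion, setIntegral_union hdisj (hS0m.inter hG) hXi.integrableOn hXi.integrableOn]
  have hOXG : (∫ ω, O ω * X ω ∂(μ[|G])) = gT⁻¹ * I1 := by
    rw [myintegral_cond, hinv, ← hgT]
    congr 1
    calc ∫ x in G, O x * X x ∂μ = ∫ x in G, S1.indicator X x ∂μ :=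
          integral_congr_ae (Filter.Eventually.of_forall fun ω => hOXind ω)
      _ = ∫ x in S1, X x ∂(μ.restrict G) := integral_indicator hS1m
      _ = I1 := by rw [Measure.restrict_restrict hS1m, hI1]
  -- conditional covariance
  have hPG : IsProbabilityMeasure (μ[|G]) := cond_isProbabilityMeasure hGpos.ne'
  have hXG : Integrable X (μ[|G]) := myintegrable_cond μ hXi G hGpos.ne'
  have hOGi : Integrable O (μ[|G]) := by
    have h : Integrable (S1.indicator (fun _ => (1:ℝ))) μ := (integrable_const 1).indicator hS1m
    exact myintegrable_cond μ (h.congr (Filter.Eventually.of_forall fun ω => (hOind ω).symm))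
      G hGpos.ne'
  have hOXGi : Integrable (fun ω => O ω * X ω) (μ[|G]) := by
    have h : Integrable (S1.indicator X) μ := hXi.indicator hS1m
    exact myintegrable_cond μ (h.congr (Filter.Eventually.of_forall fun ω => (hOXind ω).symm))
      G hGpos.ne'
  have hcov : condCov (μ[|G]) O X = αg * (1 - αg) * (μgO - m0) := by
    rw [cov_expand _ O X hOGi hXG hOXGi, hOXG, ← hαg, hmG, hαg', hp, hq, hsum]
    field_simp
    ring
  -- the key ratio
  have hapos : 0 < αg * (1 - αg) := mul_pos hα0 (by linarith)
  have hrg : ρg / Real.sqrt (αg * (1 - αg)) = (μgO - m0) / σXG := by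
    rw [hρg, hcov, div_div]
    rw [show Real.sqrt (αg * (1 - αg)) * σXG * Real.sqrt (αg * (1 - αg))
        = (αg * (1 - αg)) * σXG by
      rw [mul_right_comm, Real.mul_self_sqrt hapos.le]]
    exact mul_div_mul_left _ _ hapos.ne'
  -- reconstruction errors
  have hP0 : IsProbabilityMeasure (μ[|S0 ∩ G]) := cond_isProbabilityMeasure hpos0.ne'
  have hXν : Integrable X (μ[|S0 ∩ G]) := myintegrable_cond μ hXi _ hpos0.ne'
  have hX2ν : Integrable (fun ω => X ω ^ 2) (μ[|S0 ∩ G]) := myintegrable_cond μ hX2i _ hpos0.ne'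
  rw [L_expand _ X μgO hXν hX2ν, L_expand _ X μO hXν hX2ν, ← hm0def, hrg]
  exact final_algebra μgO μO m0 _ σXG hσpos
end

section
/- Positivity of the population-imputation gap (part of the proof of Theorem 3): under the assumptions Var(X | {O=0} ∩ G) = Var(X | {O=0} ∩ Gᶜ) and μ_g^O > μ^O, the population-imputation reconstruction gap is positive, Δ^{pop}_g > 0, if and only if either (E > R_E and H > R_H) or (E < R_E and H < R_H), where E = ρ_g·σ_{X|G}·e(α_g) − ρ_{¬g}·σ_{X|Gᶜ}·e(α_{¬g}), R_E = μ_g − μ_{¬g}, H = ρ_g·σ_{X|G}·h(α_g, r_g, α_{¬g}) + ρ_{¬g}·σ_{X|Gᶜ}·h(α_{¬g}, 1−r_g, α_g), and R_H = ((1−r_g)·α_{¬g} − r_g·α_g)·(μ_g − μ_{¬g}). -/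
open MeasureTheory ProbabilityTheory

section Aux

variable {Ω : Type*} [MeasurableSpace Ω]

lemma cond_integral (μ : Measure Ω) (A : Set Ω) (f : Ω → ℝ) :
    ∫ x, f x ∂(μ[|A]) = (μ A).toReal⁻¹ * ∫ x in A, f x ∂μ := by
  rw [ProbabilityTheory.cond, integral_smul_measure, ENNReal.toReal_inv, smul_eq_mul]

lemma memLp_cond {μ : Measure Ω} (A : Set Ω) {f : Ω → ℝ} (hf : MemLp f 2 μ) (hA : μ A ≠ 0) :
    MemLp f 2 (μ[|A]) := by
  rw [ProbabilityTheory.cond]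
  exact (hf.restrict A).smul_measure (by simp [hA])

lemma loss_eq (ν : Measure Ω) [IsProbabilityMeasure ν] {X : Ω → ℝ} (hX : MemLp X 2 ν) (c : ℝ) :
    ∫ ω, (c - X ω)^2 ∂ν = variance X ν + (c - ∫ ω, X ω ∂ν)^2 := by
  have hXi : Integrable X ν := hX.integrable one_le_two
  have hX2i : Integrable (fun ω => X ω^2) ν := hX.integrable_sq
  rw [integral_congr_ae (ae_of_all _ (fun ω => show (c - X ω)^2 = X ω^2 - (2*c)*X ω + c^2 by ring))]
  have h1 : Integrable (fun a => X a^2 - 2*c*X a) ν := hX2i.sub (hXi.const_mul _)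
  rw [integral_add h1 (integrable_const _),
    integral_sub hX2i (hXi.const_mul _), integral_const_mul, integral_const,
    variance_eq_sub hX]
  simp only [Pi.pow_apply, measure_univ, probReal_univ, ENNReal.toReal_one, smul_eq_mul, one_mul]
  ring

lemma condCov_eq (ν : Measure Ω) [IsProbabilityMeasure ν] {O X : Ω → ℝ}
    (hOX : Integrable (fun ω => O ω * X ω) ν) (hO : Integrable O ν) (hX : Integrable X ν) :
    condCov ν O X = ∫ ω, O ω * X ω ∂ν - (∫ ω, O ω ∂ν) * (∫ ω, X ω ∂ν) := by
  unfold condCov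
  set a := ∫ x, O x ∂ν with ha
  set b := ∫ x, X x ∂ν with hb
  rw [integral_congr_ae (ae_of_all _ (fun ω => show (O ω - a)*(X ω - b) = O ω * X ω - a * X ω - b * O ω + a*b by ring))]
  have h1 : Integrable (fun ω => O ω * X ω - a * X ω) ν := hOX.sub (hX.const_mul a)
  have h2 : Integrable (fun ω => O ω * X ω - a * X ω - b * O ω) ν := h1.sub (hO.const_mul b)
  rw [integral_add h2 (integrable_const _), integral_sub h1 (hO.const_mul b),
    integral_sub hOX (hX.const_mul a), integral_const_mul, integral_const_mul, integral_const]
  simp only [measure_univ, probReal_univ, ENNReal.toReal_one, smul_eq_mul, one_mul]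
  ring

lemma sqrt_div_aux {a c : ℝ} (ha : 0 ≤ a) (hc : 0 < c) :
    Real.sqrt (a / c) = Real.sqrt (a * c) / c := by
  rw [show a / c = (a*c)/c^2 by field_simp, Real.sqrt_div (by positivity),
    Real.sqrt_sq hc.le]

end Aux

set_option maxHeartbeats 2000000 in
/-- (Part of the proof of Theorem 3.) Under equal unobserved-data variances
and `μ_g^O > μ^O`, the population-imputation gap `Δ^pop_g` is positive iff
`(E > R_E ∧ H > R_H) ∨ (E < R_E ∧ H < R_H)`. -/
theorem population_gap_positive
    {Ω : Type*} [MeasurableSpace Ω] (μ : Measure Ω) [IsProbabilityMeasure μ]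
    (X O : Ω → ℝ) (G : Set Ω)
    (hXm : Measurable X) (hOm : Measurable O) (hG : MeasurableSet G)
    (hX2 : MemLp X 2 μ)
    (hO01 : ∀ ω, O ω = 0 ∨ O ω = 1)
    (αg αng μg μng μgO μngO μO σXG σXnG ρg ρng rg
      LgPop LngPop ΔPop E RE H RH : ℝ)
    (e : ℝ → ℝ) (h : ℝ → ℝ → ℝ → ℝ)
    (hαg : αg = ∫ ω, O ω ∂(μ[|G]))
    (hαng : αng = ∫ ω, O ω ∂(μ[|Gᶜ]))
    (hμg : μg = ∫ ω, X ω ∂(μ[|G]))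
    (hμng : μng = ∫ ω, X ω ∂(μ[|Gᶜ]))
    (hμgO : μgO = ∫ ω, X ω ∂(μ[|O ⁻¹' {1} ∩ G]))
    (hμngO : μngO = ∫ ω, X ω ∂(μ[|O ⁻¹' {1} ∩ Gᶜ]))
    (hμO : μO = ∫ ω, X ω ∂(μ[|O ⁻¹' {1}]))
    (hσXG : σXG = Real.sqrt (variance X (μ[|G])))
    (hσXnG : σXnG = Real.sqrt (variance X (μ[|Gᶜ])))
    (hρg : ρg = condCov (μ[|G]) O X / (Real.sqrt (αg * (1 - αg)) * σXG))
    (hρng : ρng = condCov (μ[|Gᶜ]) O X / (Real.sqrt (αng * (1 - αng)) * σXnG))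
    (hrg : rg = (μ G).toReal)
    (hLgPop : LgPop = ∫ ω, (μO - X ω) ^ 2 ∂(μ[|O ⁻¹' {0} ∩ G]))
    (hLngPop : LngPop = ∫ ω, (μO - X ω) ^ 2 ∂(μ[|O ⁻¹' {0} ∩ Gᶜ]))
    (hΔPop : ΔPop = LgPop - LngPop)
    (he : ∀ a, e a = Real.sqrt (a / (1 - a)))
    (hh : ∀ a r b, h a r b =
      (a * r + b * (1 - r)) / Real.sqrt (a * (1 - a)) -
        Real.sqrt ((1 - a) / a) * (b * (1 - r) - a * r))
    (hE : E = ρg * σXG * e αg - ρng * σXnG * e αng)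
    (hRE : RE = μg - μng)
    (hH : H = ρg * σXG * h αg rg αng + ρng * σXnG * h αng (1 - rg) αg)
    (hRH : RH = ((1 - rg) * αng - rg * αg) * (μg - μng))
    (hr0 : 0 < rg) (hr1 : rg < 1)
    (hαg0 : 0 < αg) (hαg1 : αg < 1)
    (hαng0 : 0 < αng) (hαng1 : αng < 1)
    (hσpos : 0 < σXG) (hσnpos : 0 < σXnG)
    (hpos1g : 0 < μ (O ⁻¹' {1} ∩ G)) (hpos0g : 0 < μ (O ⁻¹' {0} ∩ G))
    (hpos1ng : 0 < μ (O ⁻¹' {1} ∩ Gᶜ)) (hpos0ng : 0 < μ (O ⁻¹' {0} ∩ Gᶜ))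
    (hvar : variance X (μ[|O ⁻¹' {0} ∩ G]) = variance X (μ[|O ⁻¹' {0} ∩ Gᶜ]))
    (hmean : μgO > μO) :
    ΔPop > 0 ↔ (E > RE ∧ H > RH) ∨ (E < RE ∧ H < RH) := by
  classical
  set A1 : Set Ω := O ⁻¹' {1} with hA1def
  set A0 : Set Ω := O ⁻¹' {0} with hA0def
  have hA1 : MeasurableSet A1 := hOm (measurableSet_singleton 1)
  have hA0 : MeasurableSet A0 := hOm (measurableSet_singleton 0)
  have hdis : Disjoint A1 A0 := by
    rw [Set.disjoint_left]
    intro x h1 h0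
    simp only [hA1def, hA0def, Set.mem_preimage, Set.mem_singleton_iff] at h1 h0
    rw [h1] at h0; norm_num at h0
  have hcover : A1 ∪ A0 = Set.univ := by
    ext x
    simp only [hA1def, hA0def, Set.mem_union, Set.mem_preimage, Set.mem_singleton_iff,
      Set.mem_univ, iff_true]
    rcases hO01 x with h' | h'
    · exact Or.inr h'
    · exact Or.inl h'
  have hXint : Integrable X μ := hX2.integrable one_le_two
  have msplit : ∀ S : Set Ω, MeasurableSet S → μ S = μ (A1 ∩ S) + μ (A0 ∩ S) := by
    intro S hS
    rw [← measure_union (hdis.mono Set.inter_subset_left Set.inter_subset_left)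
      (hA0.inter hS), ← Set.union_inter_distrib_right, hcover, Set.univ_inter]
  have isplit : ∀ S : Set Ω, MeasurableSet S →
      ∫ x in S, X x ∂μ = (∫ x in A1 ∩ S, X x ∂μ) + ∫ x in A0 ∩ S, X x ∂μ := by
    intro S hS
    rw [← setIntegral_union (hdis.mono Set.inter_subset_left Set.inter_subset_left)
      (hA0.inter hS) hXint.integrableOn hXint.integrableOn,
      ← Set.union_inter_distrib_right, hcover, Set.univ_inter]
  have hOind : ∀ x, O x = A1.indicator (fun _ => (1:ℝ)) x := by
    intro x
    rcases hO01 x with h' | h'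
    · rw [h', Set.indicator_of_notMem (by simp [hA1def, h'])]
    · rw [h', Set.indicator_of_mem (by simp [hA1def, h'])]
  have hOXind : ∀ x, O x * X x = A1.indicator X x := by
    intro x
    rcases hO01 x with h' | h'
    · rw [h', Set.indicator_of_notMem (by simp [hA1def, h'])]; ring
    · rw [h', Set.indicator_of_mem (by simp [hA1def, h'])]; ring
  have intO : ∀ S : Set Ω, ∫ x in S, O x ∂μ = (μ (A1 ∩ S)).toReal := by
    intro S
    rw [integral_congr_ae (ae_of_all _ (fun x => hOind x)), integral_indicator hA1,
      Measure.restrict_restrict hA1, setIntegral_const, smul_eq_mul, mul_one, measureReal_def]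
  have intOX : ∀ S : Set Ω, ∫ x in S, O x * X x ∂μ = ∫ x in A1 ∩ S, X x ∂μ := by
    intro S
    rw [integral_congr_ae (ae_of_all _ (fun x => hOXind x)), integral_indicator hA1,
      Measure.restrict_restrict hA1]
  -- real-valued atoms
  set b1g := (μ (A1 ∩ G)).toReal with hb1g
  set b0g := (μ (A0 ∩ G)).toReal with hb0g
  set b1n := (μ (A1 ∩ Gᶜ)).toReal with hb1n
  set b0n := (μ (A0 ∩ Gᶜ)).toReal with hb0n
  set s1g := ∫ x in A1 ∩ G, X x ∂μ with hs1g
  set s0g := ∫ x in A0 ∩ G, X x ∂μ with hs0g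
  set s1n := ∫ x in A1 ∩ Gᶜ, X x ∂μ with hs1n
  set s0n := ∫ x in A0 ∩ Gᶜ, X x ∂μ with hs0n
  have pb1g : 0 < b1g := ENNReal.toReal_pos hpos1g.ne' (measure_ne_top μ _)
  have pb0g : 0 < b0g := ENNReal.toReal_pos hpos0g.ne' (measure_ne_top μ _)
  have pb1n : 0 < b1n := ENNReal.toReal_pos hpos1ng.ne' (measure_ne_top μ _)
  have pb0n : 0 < b0n := ENNReal.toReal_pos hpos0ng.ne' (measure_ne_top μ _)
  have hwg : (μ G).toReal = b1g + b0g := by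
    rw [msplit G hG, ENNReal.toReal_add (measure_ne_top μ _) (measure_ne_top μ _)]
  have hwn : (μ Gᶜ).toReal = b1n + b0n := by
    rw [msplit Gᶜ hG.compl, ENNReal.toReal_add (measure_ne_top μ _) (measure_ne_top μ _)]
  have hwA1 : (μ A1).toReal = b1g + b1n := by
    rw [← measure_inter_add_diff A1 hG, ENNReal.toReal_add (measure_ne_top μ _) (measure_ne_top μ _),
      Set.diff_eq]
  have hsA1 : ∫ x in A1, X x ∂μ = s1g + s1n := by
    have hu : A1 ∩ G ∪ A1 ∩ Gᶜ = A1 := by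
      rw [← Set.inter_union_distrib_left]; simp
    rw [hs1g, hs1n, ← setIntegral_union (Set.disjoint_left.mpr fun x hx hx' => hx'.2 hx.2)
      (hA1.inter hG.compl) hXint.integrableOn hXint.integrableOn, hu]
  have htotal : b1g + b0g + (b1n + b0n) = 1 := by
    rw [← hwg, ← hwn, ← ENNReal.toReal_add (measure_ne_top μ _) (measure_ne_top μ _),
      prob_add_prob_compl hG]
    simp
  -- nonvanishing measures
  have hG0 : μ G ≠ 0 := by
    intro h0
    exact absurd (le_antisymm ((measure_mono Set.inter_subset_right).trans h0.le) zero_le)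
      hpos1g.ne'
  have hGc0 : μ Gᶜ ≠ 0 := by
    intro h0
    exact absurd (le_antisymm ((measure_mono Set.inter_subset_right).trans h0.le) zero_le)
      hpos1ng.ne'
  have hA10 : μ A1 ≠ 0 := by
    intro h0
    exact absurd (le_antisymm ((measure_mono Set.inter_subset_left).trans h0.le) zero_le)
      hpos1g.ne'
  -- rewrite the defining hypotheses into atom form
  rw [cond_integral, intO G, hwg] at hαg
  rw [cond_integral, intO Gᶜ, hwn] at hαng
  rw [cond_integral, isplit G hG, hwg] at hμg
  rw [cond_integral, isplit Gᶜ hG.compl, hwn] at hμng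
  rw [cond_integral, hwA1, hsA1] at hμO
  rw [hwg] at hrg
  have h1mrg : 1 - rg = b1n + b0n := by rw [hrg]; linarith
  -- losses
  haveI i0g : IsProbabilityMeasure (μ[|A0 ∩ G]) := cond_isProbabilityMeasure hpos0g.ne'
  haveI i0n : IsProbabilityMeasure (μ[|A0 ∩ Gᶜ]) := cond_isProbabilityMeasure hpos0ng.ne'
  haveI iG : IsProbabilityMeasure (μ[|G]) := cond_isProbabilityMeasure hG0
  haveI iGc : IsProbabilityMeasure (μ[|Gᶜ]) := cond_isProbabilityMeasure hGc0
  rw [loss_eq _ (memLp_cond _ hX2 hpos0g.ne'), cond_integral] at hLgPop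
  rw [loss_eq _ (memLp_cond _ hX2 hpos0ng.ne'), cond_integral] at hLngPop
  have hΔ : ΔPop = (μO - (b0g)⁻¹ * s0g)^2 - (μO - (b0n)⁻¹ * s0n)^2 := by
    rw [hΔPop, hLgPop, hLngPop, hvar]; ring
  -- covariances
  have hOint : ∀ (ν : Measure Ω), IsProbabilityMeasure ν → Integrable O ν := by
    intro ν hν
    exact Integrable.mono' (integrable_const 1) hOm.aestronglyMeasurable
      (ae_of_all _ fun ω => by rcases hO01 ω with h' | h' <;> simp [h'])
  have hXG : Integrable X (μ[|G]) := (memLp_cond _ hX2 hG0).integrable one_le_two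
  have hXGc : Integrable X (μ[|Gᶜ]) := (memLp_cond _ hX2 hGc0).integrable one_le_two
  have hOXint : ∀ (ν : Measure Ω), Integrable X ν → Integrable (fun ω => O ω * X ω) ν := by
    intro ν hX'
    exact Integrable.mono' hX'.norm ((hOm.mul hXm).aestronglyMeasurable)
      (ae_of_all _ fun ω => by
        rcases hO01 ω with h' | h' <;> simp [h', abs_nonneg, Real.norm_eq_abs])
  have hcovG : condCov (μ[|G]) O X =
      (b1g + b0g)⁻¹ * s1g - ((b1g + b0g)⁻¹ * b1g) * ((b1g + b0g)⁻¹ * (s1g + s0g)) := by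
    rw [condCov_eq _ (hOXint _ hXG) (hOint _ iG) hXG, cond_integral, cond_integral,
      cond_integral, intOX G, intO G, isplit G hG, hwg]
  have hcovN : condCov (μ[|Gᶜ]) O X =
      (b1n + b0n)⁻¹ * s1n - ((b1n + b0n)⁻¹ * b1n) * ((b1n + b0n)⁻¹ * (s1n + s0n)) := by
    rw [condCov_eq _ (hOXint _ hXGc) (hOint _ iGc) hXGc, cond_integral, cond_integral,
      cond_integral, intOX Gᶜ, intO Gᶜ, isplit Gᶜ hG.compl, hwn]
  -- sqrt manipulations
  have pbg : (0:ℝ) < b1g + b0g := by linarith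
  have pbn : (0:ℝ) < b1n + b0n := by linarith
  set qg := Real.sqrt (αg * (1 - αg)) with hqgdef
  set qn := Real.sqrt (αng * (1 - αng)) with hqndef
  have qgpos : 0 < qg := Real.sqrt_pos.mpr (mul_pos hαg0 (by linarith))
  have qnpos : 0 < qn := Real.sqrt_pos.mpr (mul_pos hαng0 (by linarith))
  have hqg2 : qg^2 = αg * (1 - αg) := Real.sq_sqrt (mul_pos hαg0 (by linarith)).le
  have hqn2 : qn^2 = αng * (1 - αng) := Real.sq_sqrt (mul_pos hαng0 (by linarith)).le
  have hρσg : ρg * σXG = condCov (μ[|G]) O X / qg := by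
    rw [hρg]; field_simp
  have hρσn : ρng * σXnG = condCov (μ[|Gᶜ]) O X / qn := by
    rw [hρng]; field_simp
  have heαg : e αg = qg / (1 - αg) := by
    rw [he, sqrt_div_aux hαg0.le (by linarith), ← hqgdef]
  have heαn : e αng = qn / (1 - αng) := by
    rw [he, sqrt_div_aux hαng0.le (by linarith), ← hqndef]
  have hsqg : Real.sqrt ((1 - αg) / αg) = qg / αg := by
    rw [sqrt_div_aux (by linarith) hαg0, mul_comm, ← hqgdef]
  have hsqn : Real.sqrt ((1 - αng) / αng) = qn / αng := by
    rw [sqrt_div_aux (by linarith) hαng0, mul_comm, ← hqndef]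
  have hEg : ρg * σXG * e αg = condCov (μ[|G]) O X / (1 - αg) := by
    rw [hρσg, heαg]
    field_simp
    try ring
  have hEn : ρng * σXnG * e αng = condCov (μ[|Gᶜ]) O X / (1 - αng) := by
    rw [hρσn, heαn]
    field_simp
    try ring
  have hHg : ρg * σXG * h αg rg αng =
      condCov (μ[|G]) O X *
        ((αg * rg + αng * (1 - rg)) / (αg * (1 - αg)) - (αng * (1 - rg) - αg * rg) / αg) := by
    rw [hρσg, hh, hsqg, ← hqgdef, ← hqg2]
    field_simp
    try ring
  have hHn : ρng * σXnG * h αng (1 - rg) αg =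
      condCov (μ[|Gᶜ]) O X *
        ((αng * (1 - rg) + αg * (1 - (1 - rg))) / (αng * (1 - αng)) -
          (αg * (1 - (1 - rg)) - αng * (1 - rg)) / αng) := by
    rw [hρσn, hh, hsqn, ← hqndef, ← hqn2]
    field_simp
    try ring
  -- fold atoms introduced by later rewrites
  rw [← hb1g] at hαg
  rw [← hb1n] at hαng
  rw [← hs1g, ← hs0g] at hμg
  rw [← hs1n, ← hs0n] at hμng
  rw [show (1:ℝ) - (1 - rg) = rg from by ring] at hHn
  have nb0g : b0g ≠ 0 := pb0g.ne'
  have nb0n : b0n ≠ 0 := pb0n.ne'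
  have nb1g : b1g ≠ 0 := pb1g.ne'
  have nb1n : b1n ≠ 0 := pb1n.ne'
  have nbg : b1g + b0g ≠ 0 := pbg.ne'
  have nbn : b1n + b0n ≠ 0 := pbn.ne'
  have pS : (0:ℝ) < b1g + b1n := by linarith
  have nS : b1g + b1n ≠ 0 := pS.ne'
  have h1mαg : (1:ℝ) - αg = b0g / (b1g + b0g) := by
    rw [hαg]; field_simp; ring
  have h1mαn : (1:ℝ) - αng = b0n / (b1n + b0n) := by
    rw [hαng]; field_simp; ring
  have claimE : E - RE = b0n⁻¹ * s0n - b0g⁻¹ * s0g := by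
    rw [hE, hEg, hEn, hRE, hcovG, hcovN, h1mαg, h1mαn, hμg, hμng]
    field_simp
    ring
  have claimH : H - RH = (b1g + b1n) * (2 * μO - b0g⁻¹ * s0g - b0n⁻¹ * s0n) := by
    rw [hH, hHg, hHn, hRH, hcovG, hcovN, h1mrg, hrg, h1mαg, h1mαn, hαg, hαng, hμg, hμng, hμO]
    field_simp
    ring
  have hPQ : ΔPop = (b0n⁻¹ * s0n - b0g⁻¹ * s0g) * (2 * μO - b0g⁻¹ * s0g - b0n⁻¹ * s0n) := by
    rw [hΔ]; ring
  set P := b0n⁻¹ * s0n - b0g⁻¹ * s0g with hPdef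
  set Q := 2 * μO - b0g⁻¹ * s0g - b0n⁻¹ * s0n with hQdef
  constructor
  · intro hd
    have hpq : 0 < P * Q := by rw [← hPQ]; exact hd
    rcases mul_pos_iff.mp hpq with ⟨hP, hQ⟩ | ⟨hP, hQ⟩
    · refine Or.inl ⟨by linarith, ?_⟩
      have := mul_pos pS hQ
      linarith
    · refine Or.inr ⟨by linarith, ?_⟩
      have := mul_neg_of_pos_of_neg pS hQ
      linarith
  · rintro (⟨h1, h2⟩ | ⟨h1, h2⟩)
    · have hP : 0 < P := by linarith
      have hQ : 0 < Q := by
        by_contra hq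
        push_neg at hq
        have := mul_nonpos_of_nonneg_of_nonpos pS.le hq
        linarith
      have : 0 < P * Q := mul_pos hP hQ
      linarith [hPQ]
    · have hP : P < 0 := by linarith
      have hQ : Q < 0 := by
        by_contra hq
        push_neg at hq
        have := mul_nonneg pS.le hq
        linarith
      have : 0 < P * Q := mul_pos_of_neg_of_neg hP hQ
      linarith [hPQ]
end
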